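/- arXiv:2304.11803 — 2 statements merged into one kernel-verified Lean document; each statement's English description precedes it below -/
import Mathlib

section
/- Suppose a sequence (a_n)_{n≥0} in O_K gives a continued fraction converging to ξ, and suppose σ(B²−4AC) < 0. If (a_n) is ultimately periodic, then the sequences (|σ(P_n)|)_{n≥0} and (|σ(Q_n)|)_{n≥0} are bounded. -/
open Filter Topology

/-- Numerator continuants: `cfP a (n+1) = Pₙ`, with `cfP a 0 = P₋₁ = 1`. -/
def cfP {R : Type*} [CommRing R] (a : ℕ → R) : ℕ → R
  | 0 => 1
  | 1 => a 0
  | n + 2 => a (n + 1) * cfP a (n + 1) + cfP a n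

/-- Denominator continuants: `cfQ a (n+1) = Qₙ`, with `cfQ a 0 = Q₋₁ = 0`. -/
def cfQ {R : Type*} [CommRing R] (a : ℕ → R) : ℕ → R
  | 0 => 0
  | 1 => 1
  | n + 2 => a (n + 1) * cfQ a (n + 1) + cfQ a n

/-- The sequence `a` is ultimately periodic. -/
def UltimatelyPeriodic {α : Type*} (a : ℕ → α) : Prop :=
  ∃ N k : ℕ, 1 ≤ k ∧ ∀ n > N, a (n + k) = a n

/-- The continued fraction `[a₀, a₁, …]` converges to `ξ`:
`Qₙ ≠ 0` for all sufficiently large `n` and `Pₙ/Qₙ → ξ`. -/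
def CFConvergesTo (a : ℕ → ℝ) (ξ : ℝ) : Prop :=
  (∃ N, ∀ n ≥ N, cfQ a (n + 1) ≠ 0) ∧
    Tendsto (fun n => cfP a (n + 1) / cfQ a (n + 1)) atTop (nhds ξ)

variable {R : Type*} [CommRing R] {S : Type*} [CommRing S]

def cfB (x : R) : Matrix (Fin 2) (Fin 2) R := !![x, 1; 1, 0]

def cfW (a : ℕ → R) (n : ℕ) : Matrix (Fin 2) (Fin 2) R :=
  !![cfP a (n+1), cfP a n; cfQ a (n+1), cfQ a n]

def cfPd (a : ℕ → R) (n : ℕ) : ℕ → Matrix (Fin 2) (Fin 2) R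
  | 0 => 1
  | r + 1 => cfPd a n r * cfB (a (n + r + 1))

lemma cfW_succ (a : ℕ → R) (n : ℕ) : cfW a (n+1) = cfW a n * cfB (a (n+1)) := by
  ext i j
  fin_cases i <;> fin_cases j <;>
    simp [cfW, cfB, Matrix.mul_apply, Fin.sum_univ_two, cfP, cfQ] <;> ring

lemma cfW_add (a : ℕ → R) (n r : ℕ) : cfW a (n + r) = cfW a n * cfPd a n r := by
  induction r with
  | zero => simp [cfPd]
  | succ r ih =>
      have : n + (r + 1) = (n + r) + 1 := by ring
      rw [this, cfW_succ, ih, cfPd, Matrix.mul_assoc]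

lemma cfPd_congr (a : ℕ → R) (n n' : ℕ) (r : ℕ)
    (h : ∀ j, j < r → a (n + j + 1) = a (n' + j + 1)) :
    cfPd a n r = cfPd a n' r := by
  induction r with
  | zero => rfl
  | succ r ih =>
      rw [cfPd, cfPd, ih (fun j hj => h j (by omega)), h r (by omega)]

lemma cfP_map (f : R →+* S) (a : ℕ → R) : ∀ n, cfP (fun i => f (a i)) n = f (cfP a n)
  | 0 => by simp [cfP]
  | 1 => by simp [cfP]
  | (n+2) => by
      simp only [cfP, cfP_map f a (n+1), cfP_map f a n, map_add, map_mul]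

lemma cfQ_map (f : R →+* S) (a : ℕ → R) : ∀ n, cfQ (fun i => f (a i)) n = f (cfQ a n)
  | 0 => by simp [cfQ]
  | 1 => by simp [cfQ]
  | (n+2) => by
      simp only [cfQ, cfQ_map f a (n+1), cfQ_map f a n, map_add, map_mul]

lemma cfW_det (a : ℕ → R) (n : ℕ) : (cfW a n).det = (-1)^(n+1) := by
  induction n with
  | zero => simp [cfW, cfP, cfQ, Matrix.det_fin_two_of]
  | succ n ih =>
      rw [cfW_succ, Matrix.det_mul, ih]
      simp [cfB, Matrix.det_fin_two_of]
      ring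

lemma entry_bdd (M : Matrix (Fin 2) (Fin 2) ℝ) : ∃ c, 0 ≤ c ∧ ∀ i j, |M i j| ≤ c := by
  refine ⟨∑ i : Fin 2, ∑ j : Fin 2, |M i j|, by positivity, ?_⟩
  intro i j
  calc |M i j| ≤ ∑ j' : Fin 2, |M i j'| :=
        Finset.single_le_sum (fun j' _ => abs_nonneg (M i j')) (Finset.mem_univ j)
    _ ≤ ∑ i' : Fin 2, ∑ j' : Fin 2, |M i' j'| :=
        Finset.single_le_sum (fun i' _ => Finset.sum_nonneg fun j' _ => abs_nonneg (M i' j'))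
          (Finset.mem_univ i)

lemma mul_entry_bdd {X Y : Matrix (Fin 2) (Fin 2) ℝ} {cx cy : ℝ}
    (hx : ∀ i j, |X i j| ≤ cx) (hy : ∀ i j, |Y i j| ≤ cy) :
    ∀ i j, |(X * Y) i j| ≤ 2 * cx * cy := by
  intro i j
  have hcx : 0 ≤ cx := le_trans (abs_nonneg _) (hx 0 0)
  have hcy : 0 ≤ cy := le_trans (abs_nonneg _) (hy 0 0)
  have h : (X * Y) i j = X i 0 * Y 0 j + X i 1 * Y 1 j := by
    simp [Matrix.mul_apply, Fin.sum_univ_two]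
  rw [h]
  calc |X i 0 * Y 0 j + X i 1 * Y 1 j| ≤ |X i 0| * |Y 0 j| + |X i 1| * |Y 1 j| := by
        rw [← abs_mul, ← abs_mul]; exact abs_add_le _ _
    _ ≤ cx * cy + cx * cy := by
        gcongr <;> [exact hx i 0; exact hy 0 j; exact hx i 1; exact hy 1 j]
    _ = 2 * cx * cy := by ring

lemma pow_bdd (U : Matrix (Fin 2) (Fin 2) ℝ) (hdet : U.det = 1)
    (htr : (Matrix.trace U)^2 < 4) : ∃ c, 0 ≤ c ∧ ∀ m i j, |(U^m) i j| ≤ c := by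
  set t : ℝ := Matrix.trace U with ht
  have ht2 : -1 ≤ t/2 ∧ t/2 ≤ 1 := by constructor <;> nlinarith
  have htlt : (t/2)^2 < 1 := by nlinarith
  set θ := Real.arccos (t/2) with hθ
  have hcos : Real.cos θ = t/2 := Real.cos_arccos ht2.1 ht2.2
  set s := Real.sin θ with hs
  have hs0 : 0 < s := by
    rw [hs, hθ, Real.sin_arccos]
    have : 0 < 1 - (t/2)^2 := by nlinarith
    positivity
  -- Cayley-Hamilton
  have hCH : U * U = t • U - 1 := by
    have hadj : U.adjugate = t • 1 - U := by
      rw [Matrix.adjugate_fin_two]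
      ext i j
      fin_cases i <;> fin_cases j <;>
        simp [ht, Matrix.trace_fin_two, Matrix.one_apply] <;> ring
    have h1 : U * U.adjugate = U.det • 1 := Matrix.mul_adjugate U
    rw [hadj, hdet] at h1
    rw [Matrix.mul_sub, Matrix.mul_smul, Matrix.mul_one] at h1
    rw [one_smul] at h1
    rw [← h1]
    abel
  set p : ℕ → ℝ := fun m => Real.sin (m * θ) / s with hp
  have hrec : ∀ m : ℕ, p (m + 2) = t * p (m + 1) - p m := by
    intro m
    have h1 : ((m + 2 : ℕ) : ℝ) * θ = ((m+1 : ℕ) : ℝ) * θ + θ := by push_cast; ring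
    have h2 : ((m : ℕ) : ℝ) * θ = ((m+1 : ℕ) : ℝ) * θ - θ := by push_cast; ring
    have hsum : Real.sin (((m + 2 : ℕ) : ℝ) * θ) + Real.sin (((m : ℕ) : ℝ) * θ)
        = 2 * Real.sin (((m+1 : ℕ) : ℝ) * θ) * Real.cos θ := by
      rw [h1, h2, Real.sin_add, Real.sin_sub]; ring
    have : p (m + 2) + p m = 2 * Real.cos θ * p (m + 1) := by
      rw [hp]
      simp only []
      rw [← add_div, hsum]
      ring
    rw [hcos] at this
    linarith
  have hp0 : p 0 = 0 := by simp [hp]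
  have hp1 : p 1 = 1 := by
    simp [hp]
    rw [div_self (ne_of_gt hs0)]
  have key : ∀ m : ℕ, U ^ (m + 1) = p (m + 1) • U - p m • 1 := by
    intro m
    induction m with
    | zero => simp [hp0, hp1]
    | succ m ih =>
        have : U ^ (m + 2) = U ^ (m + 1) * U := by rw [pow_succ]
        rw [this, ih, hrec m, Matrix.sub_mul, Matrix.smul_mul, Matrix.smul_mul, hCH,
          Matrix.one_mul]
        rw [smul_sub, sub_smul, smul_smul]
        ext i j
        simp [Matrix.sub_apply, Matrix.smul_apply, Matrix.add_apply]
        ring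
  have hpb : ∀ m, |p m| ≤ 1 / s := by
    intro m
    rw [hp]
    simp only []
    rw [abs_div, abs_of_pos hs0]
    gcongr
    · exact Real.abs_sin_le_one _
  obtain ⟨cu, hcu0, hcu⟩ := entry_bdd U
  refine ⟨max 1 ((1/s) * (cu + 1)), le_trans zero_le_one (le_max_left _ _), ?_⟩
  intro m i j
  match m with
  | 0 =>
      refine le_trans ?_ (le_max_left _ _)
      simp [Matrix.one_apply]
      split <;> simp
  | (m+1) =>
      refine le_trans ?_ (le_max_right _ _)
      rw [key m]
      have h1 : |(p (m+1) • U - p m • (1 : Matrix (Fin 2) (Fin 2) ℝ)) i j|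
          ≤ |p (m+1)| * |U i j| + |p m| * |(1 : Matrix (Fin 2) (Fin 2) ℝ) i j| := by
        simp only [Matrix.sub_apply, Matrix.smul_apply, smul_eq_mul]
        calc |p (m+1) * U i j - p m * (1 : Matrix (Fin 2) (Fin 2) ℝ) i j|
            ≤ |p (m+1) * U i j| + |p m * (1 : Matrix (Fin 2) (Fin 2) ℝ) i j| := abs_sub _ _
          _ = _ := by rw [abs_mul, abs_mul]
      refine le_trans h1 ?_
      have hone : |(1 : Matrix (Fin 2) (Fin 2) ℝ) i j| ≤ 1 := by
        simp [Matrix.one_apply]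
        split <;> simp
      have hsinv : (0:ℝ) ≤ 1/s := by positivity
      calc |p (m+1)| * |U i j| + |p m| * |(1 : Matrix (Fin 2) (Fin 2) ℝ) i j|
          ≤ (1/s) * cu + (1/s) * 1 := by
            gcongr
            · exact hpb _
            · exact hcu i j
            · exact hpb _
          _ = (1/s) * (cu + 1) := by ring

lemma xi_not_mem (K : Subfield ℝ) (hK : Module.finrank ℚ K = 2)
    (ξ : ℝ) (hquartic : (minpoly ℚ ξ).natDegree = 4) :
    ∀ y : K, (y : ℝ) ≠ ξ := by
  intro y h
  have hfd : FiniteDimensional ℚ K := by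
    have : 0 < Module.finrank ℚ K := by rw [hK]; norm_num
    exact FiniteDimensional.of_finrank_pos this
  have hmp : minpoly ℚ ξ = minpoly ℚ y := by
    have h2 := minpoly.algHom_eq (K.subtype.toRatAlgHom) (K.subtype.injective) y
    have h3 : K.subtype.toRatAlgHom y = (y : ℝ) := rfl
    rw [h3, h] at h2
    exact h2
  have hle : (minpoly ℚ y).natDegree ≤ Module.finrank ℚ K := minpoly.natDegree_le y
  rw [hK] at hle
  rw [hmp] at hquartic
  omega


set_option maxHeartbeats 1000000 in
/-- if `σ(B² − 4AC) < 0` and the expansion is ultimately periodic,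
then `|σ(Pₙ)|` and `|σ(Qₙ)|` are bounded. -/
theorem conj_continuants_bounded
    (K : Subfield ℝ) (hK : Module.finrank ℚ K = 2)
    (σ : K →+* ℝ) (hσ : σ ≠ K.subtype)
    (ξ : ℝ) (hquartic : (minpoly ℚ ξ).natDegree = 4)
    (A B C : K) (hAint : IsIntegral ℤ A) (hBint : IsIntegral ℤ B)
    (hCint : IsIntegral ℤ C) (hA : A ≠ 0)
    (heq : (A : ℝ) * ξ ^ 2 + (B : ℝ) * ξ + (C : ℝ) = 0)
    (hdisc : σ (B ^ 2 - 4 * A * C) < 0)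
    (a : ℕ → K) (ha : ∀ n, IsIntegral ℤ (a n))
    (hconv : CFConvergesTo (fun n => (a n : ℝ)) ξ)
    (hper : UltimatelyPeriodic a) :
    ∃ M : ℝ, ∀ n, |σ (cfP a (n + 1))| ≤ M ∧ |σ (cfQ a (n + 1))| ≤ M := by
  have hxi := xi_not_mem K hK ξ hquartic
  obtain ⟨⟨N₁, hQ⟩, hlim⟩ := hconv
  obtain ⟨Np, k, hk1, hperiod⟩ := hper
  set N₀ := max Np N₁ + 1 with hN₀
  -- translate the real continuants to K-continuants
  have hfP : ∀ n, cfP (fun i => ((a i : K) : ℝ)) n = ((cfP a n : K) : ℝ) := by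
    intro n
    have := cfP_map K.subtype a n
    simpa [Subfield.coe_subtype] using this
  have hfQ : ∀ n, cfQ (fun i => ((a i : K) : ℝ)) n = ((cfQ a n : K) : ℝ) := by
    intro n
    have := cfQ_map K.subtype a n
    simpa [Subfield.coe_subtype] using this
  have hQ' : ∀ n, N₀ ≤ n → ((cfQ a (n+1) : K) : ℝ) ≠ 0 := by
    intro n hn
    have := hQ n (by omega)
    rwa [hfQ] at this
  have hlim' : Tendsto (fun n => ((cfP a (n+1) : K) : ℝ) / ((cfQ a (n+1) : K) : ℝ))
      atTop (nhds ξ) := by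
    have hfun : (fun n => cfP (fun i => ((a i : K) : ℝ)) (n+1) / cfQ (fun i => ((a i : K) : ℝ)) (n+1))
        = (fun n => ((cfP a (n+1) : K) : ℝ) / ((cfQ a (n+1) : K) : ℝ)) := by
      funext n; rw [hfP, hfQ]
    rw [← hfun]
    exact hlim
  have hper2 : ∀ s, Np < s → ∀ m, a (s + k*m) = a s := by
    intro s hs m
    induction m with
    | zero => simp
    | succ m ih =>
        have h1 : s + k*(m+1) = (s + k*m) + k := by ring
        rw [h1, hperiod _ (by omega), ih]
  set W₀ := cfW a N₀ with hW₀
  have hdetW₀ : W₀.det = (-1 : K)^(N₀+1) := cfW_det a N₀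
  have hdetW₀ne : W₀.det ≠ 0 := by
    rw [hdetW₀]; exact pow_ne_zero _ (by norm_num)
  have hW₀unit : IsUnit W₀.det := hdetW₀ne.isUnit
  set T' := cfW a (N₀ + k) * W₀⁻¹ with hT'
  have hT'W : T' * W₀ = cfW a (N₀ + k) := by
    rw [hT', Matrix.mul_assoc, Matrix.nonsing_inv_mul _ hW₀unit, Matrix.mul_one]
  have hWPd : W₀ * cfPd a N₀ k = T' * W₀ := by
    rw [hT'W, ← cfW_add]
  have hWpow : ∀ m, cfW a (N₀ + k*m) = T'^m * W₀ := by
    intro m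
    induction m with
    | zero => simp [hW₀]
    | succ m ih =>
        have h1 : N₀ + k*(m+1) = (N₀ + k*m) + k := by ring
        rw [h1, cfW_add, ih]
        have hcongr : cfPd a (N₀ + k*m) k = cfPd a N₀ k := by
          apply cfPd_congr
          intro j hj
          have h2 : N₀ + k*m + j + 1 = (N₀ + j + 1) + k*m := by ring
          rw [h2, hper2 _ (by omega)]
        rw [hcongr, Matrix.mul_assoc, hWPd, ← Matrix.mul_assoc, ← pow_succ]
  have hstep : ∀ m, cfW a (N₀ + k*(m+1)) = T' * cfW a (N₀ + k*m) := by
    intro m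
    rw [hWpow, hWpow, pow_succ', Matrix.mul_assoc]
  have hdetT' : T'.det = (-1 : K)^k := by
    have h1 : (W₀⁻¹).det = ((-1 : K)^(N₀+1))⁻¹ := by
      rw [Matrix.det_nonsing_inv, hdetW₀, Ring.inverse_eq_inv']
    rw [hT', Matrix.det_mul, cfW_det, h1, ← inv_pow, inv_neg_one]
    have h3 : N₀ + k + 1 = (N₀ + 1) + k := by ring
    rw [h3, pow_add]
    have h2 : (-1 : K)^(N₀+1) * (-1 : K)^(N₀+1) = 1 := by
      rw [← pow_add]; exact Even.neg_one_pow ⟨N₀+1, by ring⟩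
    calc (-1:K)^(N₀+1) * (-1:K)^k * (-1:K)^(N₀+1)
        = ((-1:K)^(N₀+1) * (-1:K)^(N₀+1)) * (-1:K)^k := by ring
      _ = (-1:K)^k := by rw [h2, one_mul]
  -- the fixed point argument
  have eK : ∀ m, cfP a (N₀ + k*(m+1) + 1)
        = T' 0 0 * cfP a (N₀ + k*m + 1) + T' 0 1 * cfQ a (N₀ + k*m + 1) ∧
      cfQ a (N₀ + k*(m+1) + 1)
        = T' 1 0 * cfP a (N₀ + k*m + 1) + T' 1 1 * cfQ a (N₀ + k*m + 1) := by
    intro m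
    constructor
    · have h0 : cfW a (N₀ + k*(m+1)) 0 0 = (T' * cfW a (N₀ + k*m)) 0 0 := by rw [hstep m]
      simpa [cfW, Matrix.mul_apply, Fin.sum_univ_two] using h0
    · have h0 : cfW a (N₀ + k*(m+1)) 1 0 = (T' * cfW a (N₀ + k*m)) 1 0 := by rw [hstep m]
      simpa [cfW, Matrix.mul_apply, Fin.sum_univ_two] using h0
  have hKquad : ((T' 1 0 : K) : ℝ) * ξ^2 + ((T' 1 1 - T' 0 0 : K) : ℝ) * ξ
      + ((-(T' 0 1) : K) : ℝ) = 0 := by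
    set c00 : ℝ := ((T' 0 0 : K) : ℝ) with hc00
    set c01 : ℝ := ((T' 0 1 : K) : ℝ) with hc01
    set c10 : ℝ := ((T' 1 0 : K) : ℝ) with hc10
    set c11 : ℝ := ((T' 1 1 : K) : ℝ) with hc11
    set pm : ℕ → ℝ := fun m => ((cfP a (N₀ + k*m + 1) : K) : ℝ) with hpm
    set qm : ℕ → ℝ := fun m => ((cfQ a (N₀ + k*m + 1) : K) : ℝ) with hqm
    have hq0 : ∀ m, qm m ≠ 0 := fun m => hQ' _ (Nat.le_add_right _ _)
    have eP : ∀ m, pm (m+1) = c00 * pm m + c01 * qm m := by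
      intro m
      have := congrArg (fun x : K => (x : ℝ)) (eK m).1
      push_cast at this
      exact this
    have eQ : ∀ m, qm (m+1) = c10 * pm m + c11 * qm m := by
      intro m
      have := congrArg (fun x : K => (x : ℝ)) (eK m).2
      push_cast at this
      exact this
    set x' : ℕ → ℝ := fun m => pm m / qm m with hx'def
    have hφ : Tendsto (fun m => N₀ + k*m) atTop atTop := by
      apply tendsto_atTop_mono (f := id)
      · intro m
        have : m ≤ k*m := Nat.le_mul_of_pos_left m (by omega)
        simp only [id]
        omega
      · exact tendsto_id
    have hx' : Tendsto x' atTop (nhds ξ) := by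
      have : x' = (fun n => ((cfP a (n+1) : K) : ℝ) / ((cfQ a (n+1) : K) : ℝ))
          ∘ (fun m => N₀ + k*m) := rfl
      rw [this]
      exact hlim'.comp hφ
    have hden_t : Tendsto (fun m => qm (m+1) / qm m) atTop (nhds (c10 * ξ + c11)) := by
      have hfn : (fun m => qm (m+1) / qm m) = fun m => c10 * x' m + c11 := by
        funext m
        rw [eQ m, hx'def]
        field_simp [hq0 m]
      rw [hfn]
      exact (hx'.const_mul c10).add tendsto_const_nhds
    have hnum_t : Tendsto (fun m => pm (m+1) / qm m) atTop (nhds (c00 * ξ + c01)) := by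
      have hfn : (fun m => pm (m+1) / qm m) = fun m => c00 * x' m + c01 := by
        funext m
        rw [eP m, hx'def]
        field_simp [hq0 m]
      rw [hfn]
      exact (hx'.const_mul c00).add tendsto_const_nhds
    have hden0 : c10 * ξ + c11 ≠ 0 := by
      intro hd0
      by_cases h10 : T' 1 0 = 0
      · have hc10z : c10 = 0 := by rw [hc10, h10]; norm_num
        have hc11z : T' 1 1 = 0 := by
          have : c11 = 0 := by rw [hc10z] at hd0; linarith
          rw [hc11] at this
          exact_mod_cast this
        have hdz : T'.det = 0 := by
          rw [Matrix.det_fin_two, hc11z, h10]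
          ring
        rw [hdetT'] at hdz
        exact pow_ne_zero k (by norm_num : (-1 : K) ≠ 0) hdz
      · apply hxi (-(T' 1 1) / T' 1 0)
        have h10' : c10 ≠ 0 := by
          rw [hc10]
          exact fun h => h10 (by exact_mod_cast h)
        push_cast
        rw [← hc10, ← hc11]
        field_simp
        linarith
    have hx'' : Tendsto (fun m => x' (m+1)) atTop (nhds ξ) :=
      hx'.comp (tendsto_add_atTop_nat 1)
    have hratio : (fun m => x' (m+1)) = fun m => (pm (m+1)/qm m) / (qm (m+1)/qm m) := by
      funext m
      rw [hx'def]
      field_simp [hq0 m, hq0 (m+1)]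
    have h2 : Tendsto (fun m => x' (m+1)) atTop
        (nhds ((c00 * ξ + c01) / (c10 * ξ + c11))) := by
      rw [hratio]
      exact hnum_t.div hden_t hden0
    have hξeq : (c00 * ξ + c01) / (c10 * ξ + c11) = ξ := tendsto_nhds_unique h2 hx''
    rw [div_eq_iff hden0] at hξeq
    push_cast
    simp only [← hc00, ← hc01, ← hc10, ← hc11]
    linear_combination -hξeq
  -- uniform bound on the powers of `T'.map σ`
  have hσinj : Function.Injective σ := σ.injective
  have hmap_pow : ∀ m : ℕ, (T'^m).map (σ : K →+* ℝ) = (T'.map σ)^m := by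
    intro m
    rw [← RingHom.mapMatrix_apply, ← RingHom.mapMatrix_apply, map_pow]
  have hU : ∃ cU : ℝ, 0 ≤ cU ∧ ∀ m i j, |((T'.map σ)^m) i j| ≤ cU := by
    by_cases hα : T' 1 0 = 0
    · -- degenerate case: T' is scalar
      have hquad' : ((T' 1 1 - T' 0 0 : K) : ℝ) * ξ + ((-(T' 0 1) : K) : ℝ) = 0 := by
        have := hKquad
        rw [hα] at this
        push_cast at this ⊢
        linarith [this]
      have hβ : T' 1 1 - T' 0 0 = 0 := by
        by_contra hβ
        apply hxi ((T' 0 1) / (T' 1 1 - T' 0 0))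
        have hβ' : ((T' 1 1 - T' 0 0 : K) : ℝ) ≠ 0 := fun h => hβ (by exact_mod_cast h)
        push_cast at hquad' hβ' ⊢
        field_simp
        linarith
      have hγ : T' 0 1 = 0 := by
        rw [hβ] at hquad'
        have : ((-(T' 0 1) : K) : ℝ) = 0 := by push_cast at hquad' ⊢; linarith
        have h2 : (-(T' 0 1) : K) = 0 := by exact_mod_cast this
        linarith [h2]
      have h11 : T' 1 1 = T' 0 0 := by linear_combination hβ
      have hlam2 : T' 0 0 ^ 2 = (-1 : K)^k := by
        have hd := hdetT'
        rw [Matrix.det_fin_two, h11, hγ, hα] at hd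
        linear_combination hd
      have hkeven : (-1 : K)^k = 1 := by
        rcases Nat.even_or_odd k with he | ho
        · exact he.neg_one_pow
        · exfalso
          rw [ho.neg_one_pow] at hlam2
          have : ((T' 0 0 : K) : ℝ)^2 = -1 := by exact_mod_cast congrArg (fun x : K => (x:ℝ)) hlam2
          nlinarith [sq_nonneg ((T' 0 0 : K) : ℝ)]
      rw [hkeven] at hlam2
      have hlam : T' 0 0 = 1 ∨ T' 0 0 = -1 := by
        have h2 : (T' 0 0 - 1) * (T' 0 0 + 1) = 0 := by linear_combination hlam2
        rcases mul_eq_zero.1 h2 with h | h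
        · left; linear_combination h
        · right; linear_combination h
      have hUscal : T'.map σ = σ (T' 0 0) • (1 : Matrix (Fin 2) (Fin 2) ℝ) := by
        ext i j
        fin_cases i <;> fin_cases j <;>
          simp [Matrix.map_apply, hα, hγ, h11, Matrix.one_apply]
      have hsl : |σ (T' 0 0)| = 1 := by
        rcases hlam with h | h
        · rw [h, map_one, abs_one]
        · rw [h, map_neg, map_one, abs_neg, abs_one]
      refine ⟨1, zero_le_one, ?_⟩
      intro m i j
      rw [hUscal, smul_pow, one_pow]
      rw [Matrix.smul_apply, smul_eq_mul, abs_mul, abs_pow, hsl, one_pow, one_mul]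
      by_cases hij : i = j
      · simp [Matrix.one_apply, hij]
      · simp [Matrix.one_apply, hij]
    · -- main case
      have hα' : ((T' 1 0 : K) : ℝ) ≠ 0 := fun h => hα (by exact_mod_cast h)
      set β : K := T' 1 1 - T' 0 0 with hβdef
      set γ : K := -(T' 0 1) with hγdef
      -- proportionality
      have h1 : A * β = T' 1 0 * B := by
        by_contra h1
        apply hxi (-(A * γ - T' 1 0 * C) / (A * β - T' 1 0 * B))
        have hne : ((A * β - T' 1 0 * B : K) : ℝ) ≠ 0 := by
          intro h; apply h1
          have : (A * β - T' 1 0 * B : K) = 0 := by exact_mod_cast h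
          linear_combination this
        push_cast at hne hKquad ⊢
        field_simp
        first
        | linear_combination (↑(T' 1 0) : ℝ) * heq - (↑A : ℝ) * hKquad
        | linear_combination (↑A : ℝ) * hKquad - (↑(T' 1 0) : ℝ) * heq
      have h2 : A * γ = T' 1 0 * C := by
        have hlin : ((A * γ - T' 1 0 * C : K) : ℝ) = 0 := by
          have h1' := congrArg (fun x : K => (x : ℝ)) h1
          push_cast at h1' hKquad ⊢
          linear_combination (↑A : ℝ) * hKquad - (↑(T' 1 0) : ℝ) * heq - ξ * h1'
        have : (A * γ - T' 1 0 * C : K) = 0 := by exact_mod_cast hlin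
        linear_combination this
      set δ : K := β^2 - 4 * (T' 1 0) * γ with hδdef
      have hAδ : A^2 * δ = (T' 1 0)^2 * (B^2 - 4*A*C) := by
        rw [hδdef]
        linear_combination (A*β + T' 1 0 * B) * h1 - 4 * (T' 1 0) * A * h2
      have hσA : σ A ≠ 0 := fun h => hA (hσinj (by rw [h, map_zero]))
      have hσα : σ (T' 1 0) ≠ 0 := fun h => hα (hσinj (by rw [h, map_zero]))
      have hσeq : σ A ^ 2 * σ δ = σ (T' 1 0) ^ 2 * σ (B^2 - 4*A*C) := by
        have := congrArg σ hAδ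
        simpa only [map_mul, map_pow] using this
      have hA2 : 0 < σ A ^ 2 :=
        lt_of_le_of_ne (sq_nonneg _) (Ne.symm (pow_ne_zero 2 hσA))
      have hα2 : 0 < σ (T' 1 0) ^ 2 :=
        lt_of_le_of_ne (sq_nonneg _) (Ne.symm (pow_ne_zero 2 hσα))
      have hσδ : σ δ < 0 := by
        have h5 : σ A ^ 2 * σ δ < 0 := by
          rw [hσeq]; exact mul_neg_of_pos_of_neg hα2 hdisc
        nlinarith
      set U : Matrix (Fin 2) (Fin 2) ℝ := T'.map σ with hUdef
      have hUentry : ∀ i j, U i j = σ (T' i j) := fun i j => rfl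
      have hdetU : U.det = σ (T'.det) := by
        rw [Matrix.det_fin_two, Matrix.det_fin_two, map_sub, map_mul, map_mul]
        rfl
      have htrU : Matrix.trace U = σ (T' 0 0) + σ (T' 1 1) := by
        rw [Matrix.trace_fin_two]; rfl
      have hσδ' : σ δ = (Matrix.trace U)^2 - 4 * U.det := by
        rw [htrU, hdetU, hδdef, hβdef, hγdef, Matrix.det_fin_two]
        push_cast [map_sub, map_mul, map_pow, map_neg, map_ofNat]
        ring
      have hdetU1 : U.det = 1 := by
        have hdetU' : U.det = σ ((-1 : K)^k) := by rw [hdetU, hdetT']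
        rcases Nat.even_or_odd k with he | ho
        · rw [he.neg_one_pow, map_one] at hdetU'; exact hdetU'
        · exfalso
          rw [ho.neg_one_pow, map_neg, map_one] at hdetU'
          rw [hσδ', hdetU'] at hσδ
          nlinarith [sq_nonneg (Matrix.trace U)]
      have htr4 : (Matrix.trace U)^2 < 4 := by
        rw [hσδ', hdetU1] at hσδ
        nlinarith
      obtain ⟨c, hc0, hc⟩ := pow_bdd U hdetU1 htr4
      exact ⟨c, hc0, hc⟩
  -- final assembly
  obtain ⟨cU, hcU0, hcU⟩ := hU
  obtain ⟨cW, hcW0, hcW⟩ := entry_bdd (W₀.map σ)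
  choose g hg0 hg using fun r => entry_bdd ((cfPd a N₀ r).map σ)
  have hkne : (Finset.range k).Nonempty := ⟨0, Finset.mem_range.2 (by omega)⟩
  set cR := (Finset.range k).sup' hkne g with hcRdef
  have hcR : ∀ r, r < k → ∀ i j, |((cfPd a N₀ r).map σ) i j| ≤ cR := by
    intro r hr i j
    exact le_trans (hg r i j) (Finset.le_sup' g (Finset.mem_range.2 hr))
  have hN₀ne : (Finset.range (N₀+1)).Nonempty := ⟨0, Finset.mem_range.2 (by omega)⟩
  set c0 := (Finset.range (N₀+1)).sup' hN₀ne
      (fun n => |σ (cfP a (n+1))| + |σ (cfQ a (n+1))|) with hc0def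
  refine ⟨max c0 (2 * (2 * cU * cW) * cR), ?_⟩
  intro n
  by_cases hn : n < N₀
  · have h := Finset.le_sup' (f := fun n => |σ (cfP a (n+1))| + |σ (cfQ a (n+1))|)
      (Finset.mem_range.2 (show n < N₀ + 1 by omega))
    constructor
    · refine le_trans ?_ (le_max_left _ _)
      refine le_trans ?_ h
      exact le_add_of_nonneg_right (abs_nonneg _)
    · refine le_trans ?_ (le_max_left _ _)
      refine le_trans ?_ h
      exact le_add_of_nonneg_left (abs_nonneg _)
  · set m := (n - N₀) / k with hmdef
    set r := (n - N₀) % k with hrdef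
    have hr : r < k := Nat.mod_lt _ (by omega)
    have hdm : k * m + r = n - N₀ := Nat.div_add_mod _ _
    have hn' : n = (N₀ + k * m) + r := by omega
    have hWn : cfW a n = (T'^m * W₀) * cfPd a N₀ r := by
      rw [hn', cfW_add, hWpow]
      congr 1
      apply cfPd_congr
      intro j hj
      have h2 : N₀ + k*m + j + 1 = (N₀ + j + 1) + k*m := by ring
      rw [h2, hper2 _ (by omega)]
    have hWmap : (cfW a n).map (σ : K →+* ℝ)
        = ((T'.map σ)^m * (W₀.map σ)) * ((cfPd a N₀ r).map σ) := by
      rw [hWn, Matrix.map_mul, Matrix.map_mul, hmap_pow]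
    have hb : ∀ i j, |((cfW a n).map (σ : K →+* ℝ)) i j| ≤ 2 * (2*cU*cW) * cR := by
      intro i j
      rw [hWmap]
      exact mul_entry_bdd (mul_entry_bdd (hcU m) hcW) (hcR r hr) i j
    constructor
    · have h := hb 0 0
      have he : ((cfW a n).map (σ : K →+* ℝ)) 0 0 = σ (cfP a (n+1)) := by
        simp [cfW, Matrix.map_apply]
      rw [he] at h
      exact le_trans h (le_max_right _ _)
    · have h := hb 1 0
      have he : ((cfW a n).map (σ : K →+* ℝ)) 1 0 = σ (cfQ a (n+1)) := by
        simp [cfW, Matrix.map_apply]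
      rw [he] at h
      exact le_trans h (le_max_right _ _)
end

section
/- Suppose a sequence (a_n)_{n≥0} in O_K gives a continued fraction converging to ξ, suppose both B²−4AC > 0 and σ(B²−4AC) > 0 (so all algebraic conjugates of ξ are real), and suppose a_n ≥ 1 and σ(a_n) > 0 for all n ≥ 1. If no root of σ(A)x² + σ(B)x + σ(C) = 0 lies in the open interval (σ(a_0), σ(a_0) + 1/σ(a_1)), then the sequence (a_n) is not ultimately periodic. -/
open Filter Topology

section helpers
variable {R : Type*} [CommRing R]

lemma cfP_zero (a : ℕ → R) : cfP a 0 = 1 := rfl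
lemma cfP_one (a : ℕ → R) : cfP a 1 = a 0 := rfl
lemma cfQ_zero (a : ℕ → R) : cfQ a 0 = 0 := rfl
lemma cfQ_one (a : ℕ → R) : cfQ a 1 = 1 := rfl
lemma cfP_ss (a : ℕ → R) (n : ℕ) : cfP a (n+2) = a (n+1) * cfP a (n+1) + cfP a n := rfl
lemma cfQ_ss (a : ℕ → R) (n : ℕ) : cfQ a (n+2) = a (n+1) * cfQ a (n+1) + cfQ a n := rfl

lemma cf_det (a : ℕ → R) : ∀ n : ℕ, cfP a (n+1) * cfQ a n - cfP a n * cfQ a (n+1) = (-1)^(n+1) := by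
  intro n
  induction n with
  | zero => simp [cfP_zero, cfP_one, cfQ_zero, cfQ_one]
  | succ n ih =>
    have h : cfP a (n+2) * cfQ a (n+1) - cfP a (n+1) * cfQ a (n+2)
        = -(cfP a (n+1) * cfQ a n - cfP a n * cfQ a (n+1)) := by
      rw [cfP_ss, cfQ_ss]; ring
    rw [h, ih]; ring

lemma cf_comp (a : ℕ → R) (s : ℕ) : ∀ n : ℕ,
    (cfP a (s+1+n) = cfP a (s+1) * cfP (fun j => a (j+(s+1))) n + cfP a s * cfQ (fun j => a (j+(s+1))) n ∧
     cfQ a (s+1+n) = cfQ a (s+1) * cfP (fun j => a (j+(s+1))) n + cfQ a s * cfQ (fun j => a (j+(s+1))) n) := by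
  set b : ℕ → R := fun j => a (j+(s+1)) with hb
  have key : ∀ n : ℕ,
      ((cfP a (s+1+n) = cfP a (s+1) * cfP b n + cfP a s * cfQ b n ∧
        cfQ a (s+1+n) = cfQ a (s+1) * cfP b n + cfQ a s * cfQ b n) ∧
       (cfP a (s+1+(n+1)) = cfP a (s+1) * cfP b (n+1) + cfP a s * cfQ b (n+1) ∧
        cfQ a (s+1+(n+1)) = cfQ a (s+1) * cfP b (n+1) + cfQ a s * cfQ b (n+1))) := by
    intro n
    induction n with
    | zero =>
      constructor
      · simp [cfP_zero, cfP_one, cfQ_zero, cfQ_one]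
      · constructor
        · rw [show s+1+1 = s+2 by omega, cfP_ss, cfP_one, cfQ_one]
          simp only [hb]
          rw [show 0+(s+1) = s+1 by omega]; ring
        · rw [show s+1+1 = s+2 by omega, cfQ_ss, cfP_one, cfQ_one]
          simp only [hb]
          rw [show 0+(s+1) = s+1 by omega]; ring
    | succ n ih =>
      refine ⟨ih.2, ?_, ?_⟩
      · rw [show s+1+(n+1+1) = (s+1+n)+2 by omega, cfP_ss,
          show n+1+1 = n+2 by omega, cfP_ss b, cfQ_ss b,
          show s+1+n+1 = s+1+(n+1) by omega, ih.2.1, ih.1.1]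
        have hbn : a (s+1+(n+1)) = b (n+1) := by simp only [hb]; congr 1; omega
        rw [hbn]; ring
      · rw [show s+1+(n+1+1) = (s+1+n)+2 by omega, cfQ_ss,
          show n+1+1 = n+2 by omega, cfP_ss b, cfQ_ss b,
          show s+1+n+1 = s+1+(n+1) by omega, ih.2.2, ih.1.2]
        have hbn : a (s+1+(n+1)) = b (n+1) := by simp only [hb]; congr 1; omega
        rw [hbn]; ring
  exact fun n => (key n).1

lemma cf_hom {S : Type*} [CommRing S] (f : R →+* S) (a : ℕ → R) : ∀ n : ℕ,
    f (cfP a n) = cfP (fun j => f (a j)) n ∧ f (cfQ a n) = cfQ (fun j => f (a j)) n := by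
  have key : ∀ n : ℕ,
      ((f (cfP a n) = cfP (fun j => f (a j)) n ∧ f (cfQ a n) = cfQ (fun j => f (a j)) n) ∧
       (f (cfP a (n+1)) = cfP (fun j => f (a j)) (n+1) ∧ f (cfQ a (n+1)) = cfQ (fun j => f (a j)) (n+1))) := by
    intro n
    induction n with
    | zero =>
      refine ⟨⟨?_, ?_⟩, ?_, ?_⟩ <;> simp [cfP_zero, cfP_one, cfQ_zero, cfQ_one]
    | succ n ih =>
      refine ⟨ih.2, ?_, ?_⟩
      · rw [cfP_ss, cfP_ss, map_add, map_mul, ih.2.1, ih.1.1]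
      · rw [cfQ_ss, cfQ_ss, map_add, map_mul, ih.2.2, ih.1.2]
  exact fun n => (key n).1

lemma cfQ_nn_pos (c : ℕ → ℝ) (h : ∀ n, 1 ≤ n → 0 < c n) :
    ∀ n : ℕ, 0 ≤ cfQ c n ∧ 0 < cfQ c (n+1) := by
  intro n
  induction n with
  | zero => simp [cfQ_zero, cfQ_one]
  | succ n ih =>
    refine ⟨ih.2.le, ?_⟩
    rw [cfQ_ss]
    have := h (n+1) (by omega)
    nlinarith [ih.1, ih.2]

lemma cfP_pos (c : ℕ → ℝ) (h : ∀ n, 0 < c n) : ∀ n : ℕ, 0 < cfP c n := by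
  have key : ∀ n : ℕ, 0 < cfP c n ∧ 0 < cfP c (n+1) := by
    intro n
    induction n with
    | zero => constructor <;> simp [cfP_zero, cfP_one, h 0]
    | succ n ih =>
      refine ⟨ih.2, ?_⟩
      rw [cfP_ss]
      have := h (n+1)
      nlinarith [ih.1, ih.2]
  exact fun n => (key n).1

lemma cfQ_lt_two (c : ℕ → ℝ) (h : ∀ n, 1 ≤ n → 0 < c n) :
    ∀ n : ℕ, cfQ c n < cfQ c (n+2) := by
  intro n
  rw [cfQ_ss]
  have h1 := h (n+1) (by omega)
  have h2 := (cfQ_nn_pos c h n).2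
  nlinarith

lemma alt_sum : ∀ (k : ℕ) (v : ℕ → ℝ), (∀ j, 0 < v j) → (∀ j, v (j+1) < v j) →
    ((0 ≤ ∑ j ∈ Finset.range k, (-1:ℝ)^j * v j ∧ ∑ j ∈ Finset.range k, (-1:ℝ)^j * v j ≤ v 0) ∧
     (1 ≤ k → 0 < ∑ j ∈ Finset.range k, (-1:ℝ)^j * v j)) := by
  intro k
  induction k with
  | zero =>
    intro v hv _
    simp [le_of_lt (hv 0)]
  | succ k ih =>
    intro v hv hd
    have hrec : ∑ j ∈ Finset.range (k+1), (-1:ℝ)^j * v j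
        = v 0 - ∑ j ∈ Finset.range k, (-1:ℝ)^j * (v (j+1)) := by
      rw [Finset.sum_range_succ']
      have hc : ∀ j ∈ Finset.range k, (-1:ℝ)^(j+1) * v (j+1) = -((-1:ℝ)^j * v (j+1)) := by
        intro j _; ring
      rw [Finset.sum_congr rfl hc, Finset.sum_neg_distrib]
      simp; ring
    obtain ⟨⟨h0, h1⟩, _⟩ := ih (fun j => v (j+1)) (fun j => hv (j+1)) (fun j => hd (j+1))
    have hd0 := hd 0
    refine ⟨⟨?_, ?_⟩, fun _ => ?_⟩
    · rw [hrec]; linarith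
    · rw [hrec]; linarith
    · rw [hrec]; linarith

lemma cf_interval (c : ℕ → ℝ) (h : ∀ n, 1 ≤ n → 0 < c n) : ∀ (s : ℕ) (t : ℝ), 0 < t →
    ∃ u : ℝ, 0 < u ∧ (c (s+1) < t → c 1 < u) ∧
      (cfP c (s+1) * t + cfP c s) / (cfQ c (s+1) * t + cfQ c s) = c 0 + 1/u := by
  intro s
  induction s with
  | zero =>
    intro t ht
    have ht0 : t ≠ 0 := ne_of_gt ht
    refine ⟨t, ht, fun h => h, ?_⟩
    rw [cfP_one, cfP_zero, cfQ_one, cfQ_zero]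
    field_simp
    ring
  | succ s ih =>
    intro t ht
    have hcs : 0 < c (s+1) := h (s+1) (by omega)
    have ht' : 0 < c (s+1) + 1/t := by positivity
    obtain ⟨u, hu, himp, hequ⟩ := ih (c (s+1) + 1/t) ht'
    refine ⟨u, hu, fun _ => himp (lt_add_of_pos_right _ (by positivity)), ?_⟩
    have hnum : cfP c (s+1+1) * t + cfP c (s+1) = t * (cfP c (s+1) * (c (s+1) + 1/t) + cfP c s) := by
      rw [show s+1+1 = s+2 by omega, cfP_ss]
      field_simp; ring
    have hden : cfQ c (s+1+1) * t + cfQ c (s+1) = t * (cfQ c (s+1) * (c (s+1) + 1/t) + cfQ c s) := by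
      rw [show s+1+1 = s+2 by omega, cfQ_ss]
      field_simp; ring
    rw [hnum, hden, mul_div_mul_left _ _ (ne_of_gt ht), hequ]

end helpers

set_option maxHeartbeats 2000000 in
/-- if no root of the conjugate quadratic lies in
`(σ(a₀), σ(a₀) + 1/σ(a₁))`, the expansion is not ultimately periodic. -/
theorem not_periodic_of_no_root_in_interval
    (K : Subfield ℝ) (hK : Module.finrank ℚ K = 2)
    (σ : K →+* ℝ) (hσ : σ ≠ K.subtype)
    (ξ : ℝ) (hquartic : (minpoly ℚ ξ).natDegree = 4)
    (A B C : K) (hAint : IsIntegral ℤ A) (hBint : IsIntegral ℤ B)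
    (hCint : IsIntegral ℤ C) (hA : A ≠ 0)
    (heq : (A : ℝ) * ξ ^ 2 + (B : ℝ) * ξ + (C : ℝ) = 0)
    (hdisc : (0 : ℝ) < (↑(B ^ 2 - 4 * A * C : ↥K) : ℝ))
    (hdiscσ : 0 < σ (B ^ 2 - 4 * A * C))
    (a : ℕ → K) (ha : ∀ n, IsIntegral ℤ (a n))
    (hge : ∀ n : ℕ, 1 ≤ n → (1 : ℝ) ≤ (↑(a n) : ℝ) ∧ 0 < σ (a n))
    (hconv : CFConvergesTo (fun n => (a n : ℝ)) ξ)
    (hnoroot : ¬∃ x : ℝ, σ A * x ^ 2 + σ B * x + σ C = 0 ∧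
      σ (a 0) < x ∧ x < σ (a 0) + 1 / σ (a 1)) :
    ¬UltimatelyPeriodic a := by
  intro hup
  obtain ⟨N, k, hk1, hper⟩ := hup
  set cc : ℕ → ℝ := fun n => ((a n : K) : ℝ) with hcc
  unfold CFConvergesTo at hconv
  obtain ⟨-, htend⟩ := hconv
  have hccpos : ∀ n, 1 ≤ n → 0 < cc n := fun n hn => lt_of_lt_of_le one_pos (hge n hn).1
  have hQpos : ∀ i, 1 ≤ i → 0 < cfQ cc i := by
    intro i hi
    obtain ⟨n, rfl⟩ : ∃ n, i = n + 1 := ⟨i - 1, by omega⟩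
    exact (cfQ_nn_pos cc hccpos n).2
  have hQnn : ∀ i, 0 ≤ cfQ cc i := fun i => (cfQ_nn_pos cc hccpos i).1
  -- shifted convergents tend to ξ
  have hshift : ∀ m : ℕ, Tendsto (fun n : ℕ => cfP cc (m+(n+1)) / cfQ cc (m+(n+1))) atTop (𝓝 ξ) := by
    intro m
    have h1 := htend.comp (tendsto_add_atTop_nat m)
    have h2 : ((fun n => cfP cc (n+1) / cfQ cc (n+1)) ∘ fun n => n + m)
        = fun n => cfP cc (m+(n+1)) / cfQ cc (m+(n+1)) := by
      funext n
      simp only [Function.comp_apply]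
      rw [show n + m + 1 = m + (n+1) by omega]
    rwa [h2] at h1
  -- periodicity of shifted coefficient sequence
  have hcb : (fun j => cc (j+(N+k+1))) = (fun j => cc (j+(N+1))) := by
    funext j
    simp only [hcc]
    congr 1
    have h := hper (j+(N+1)) (by omega)
    rw [show j+(N+k+1) = j+(N+1)+k by omega]
    exact h
  -- the key pointwise identity
  have hΦ : ∀ n : ℕ,
      (cfP cc N - cfQ cc N * (cfP cc (N+1+(n+1))/cfQ cc (N+1+(n+1)))) *
        (cfQ cc (N+k+1) * (cfP cc (N+k+1+(n+1))/cfQ cc (N+k+1+(n+1))) - cfP cc (N+k+1))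
      - (cfP cc (N+k) - cfQ cc (N+k) * (cfP cc (N+k+1+(n+1))/cfQ cc (N+k+1+(n+1)))) *
        (cfQ cc (N+1) * (cfP cc (N+1+(n+1))/cfQ cc (N+1+(n+1))) - cfP cc (N+1)) = 0 := by
    intro n
    have e1 := (cf_comp cc N (n+1)).1
    have e2 := (cf_comp cc N (n+1)).2
    have e3 := (cf_comp cc (N+k) (n+1)).1
    have e4 := (cf_comp cc (N+k) (n+1)).2
    rw [hcb] at e3 e4
    rw [e1, e2, e3, e4]
    have hXP : 0 < cfP (fun j => cc (j+(N+1))) (n+1) :=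
      cfP_pos _ (fun j => hccpos _ (by omega)) (n+1)
    have hXQ : 0 < cfQ (fun j => cc (j+(N+1))) (n+1) :=
      (cfQ_nn_pos _ (fun j hj => hccpos _ (by omega)) n).2
    have hq1 : 0 < cfQ cc (N+1) := hQpos _ (by omega)
    have hq1' : 0 < cfQ cc (N+k+1) := hQpos _ (by omega)
    have hq0 : 0 ≤ cfQ cc N := hQnn N
    have hq0' : 0 ≤ cfQ cc (N+k) := hQnn (N+k)
    have hne1 : cfQ cc (N+1) * cfP (fun j => cc (j+(N+1))) (n+1)
        + cfQ cc N * cfQ (fun j => cc (j+(N+1))) (n+1) ≠ 0 := by positivity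
    have hne2 : cfQ cc (N+k+1) * cfP (fun j => cc (j+(N+1))) (n+1)
        + cfQ cc (N+k) * cfQ (fun j => cc (j+(N+1))) (n+1) ≠ 0 := by positivity
    field_simp
    ring
  -- pass to the limit
  have hE : (cfP cc N - cfQ cc N * ξ) * (cfQ cc (N+k+1) * ξ - cfP cc (N+k+1))
      - (cfP cc (N+k) - cfQ cc (N+k) * ξ) * (cfQ cc (N+1) * ξ - cfP cc (N+1)) = 0 := by
    have hG := hshift (N+1)
    have hH := hshift (N+k+1)
    have hL : Tendsto (fun n : ℕ =>
        (cfP cc N - cfQ cc N * (cfP cc (N+1+(n+1))/cfQ cc (N+1+(n+1)))) *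
          (cfQ cc (N+k+1) * (cfP cc (N+k+1+(n+1))/cfQ cc (N+k+1+(n+1))) - cfP cc (N+k+1))
        - (cfP cc (N+k) - cfQ cc (N+k) * (cfP cc (N+k+1+(n+1))/cfQ cc (N+k+1+(n+1)))) *
          (cfQ cc (N+1) * (cfP cc (N+1+(n+1))/cfQ cc (N+1+(n+1))) - cfP cc (N+1))) atTop
        (𝓝 ((cfP cc N - cfQ cc N * ξ) * (cfQ cc (N+k+1) * ξ - cfP cc (N+k+1))
          - (cfP cc (N+k) - cfQ cc (N+k) * ξ) * (cfQ cc (N+1) * ξ - cfP cc (N+1)))) :=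
      ((tendsto_const_nhds.sub (hG.const_mul _)).mul
          ((hH.const_mul _).sub tendsto_const_nhds)).sub
        ((tendsto_const_nhds.sub (hH.const_mul _)).mul
          ((hG.const_mul _).sub tendsto_const_nhds))
    rw [show (fun n : ℕ =>
        (cfP cc N - cfQ cc N * (cfP cc (N+1+(n+1))/cfQ cc (N+1+(n+1)))) *
          (cfQ cc (N+k+1) * (cfP cc (N+k+1+(n+1))/cfQ cc (N+k+1+(n+1))) - cfP cc (N+k+1))
        - (cfP cc (N+k) - cfQ cc (N+k) * (cfP cc (N+k+1+(n+1))/cfQ cc (N+k+1+(n+1)))) *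
          (cfQ cc (N+1) * (cfP cc (N+1+(n+1))/cfQ cc (N+1+(n+1))) - cfP cc (N+1)))
        = fun _ : ℕ => (0:ℝ) from funext hΦ] at hL
    exact (tendsto_nhds_unique hL tendsto_const_nhds)
  -- coefficients in K
  have hsub : (fun j => K.subtype (a j)) = cc := by
    funext j
    simp [hcc]
  have hcoeP : ∀ i, ((cfP a i : K) : ℝ) = cfP cc i := by
    intro i
    have h := (cf_hom K.subtype a i).1
    rw [hsub] at h
    rw [← h]
    simp
  have hcoeQ : ∀ i, ((cfQ a i : K) : ℝ) = cfQ cc i := by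
    intro i
    have h := (cf_hom K.subtype a i).2
    rw [hsub] at h
    rw [← h]
    simp
  set α : K := cfQ a (N+k) * cfQ a (N+1) - cfQ a N * cfQ a (N+k+1) with hαdef
  set β : K := cfP a N * cfQ a (N+k+1) + cfP a (N+k+1) * cfQ a N
      - cfP a (N+k) * cfQ a (N+1) - cfP a (N+1) * cfQ a (N+k) with hβdef
  set γ : K := cfP a (N+k) * cfP a (N+1) - cfP a N * cfP a (N+k+1) with hγdef
  have hαr : (α : ℝ) = cfQ cc (N+k) * cfQ cc (N+1) - cfQ cc N * cfQ cc (N+k+1) := by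
    rw [hαdef]; push_cast [hcoeQ]; ring
  have hβr : (β : ℝ) = cfP cc N * cfQ cc (N+k+1) + cfP cc (N+k+1) * cfQ cc N
      - cfP cc (N+k) * cfQ cc (N+1) - cfP cc (N+1) * cfQ cc (N+k) := by
    rw [hβdef]; push_cast [hcoeP, hcoeQ]; ring
  have hγr : (γ : ℝ) = cfP cc (N+k) * cfP cc (N+1) - cfP cc N * cfP cc (N+k+1) := by
    rw [hγdef]; push_cast [hcoeP]; ring
  have hquad : (α : ℝ) * ξ^2 + (β : ℝ) * ξ + (γ : ℝ) = 0 := by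
    rw [hαr, hβr, hγr]
    linear_combination hE
  -- the coefficients are not all zero
  have hne0 : ¬(α = 0 ∧ β = 0 ∧ γ = 0) := by
    rintro ⟨h1, h2, h3⟩
    have hα0 : cfQ cc (N+k) * cfQ cc (N+1) - cfQ cc N * cfQ cc (N+k+1) = 0 := by
      rw [← hαr, h1]; simp
    have hβ0 : cfP cc N * cfQ cc (N+k+1) + cfP cc (N+k+1) * cfQ cc N
        - cfP cc (N+k) * cfQ cc (N+1) - cfP cc (N+1) * cfQ cc (N+k) = 0 := by
      rw [← hβr, h2]; simp
    have hγ0 : cfP cc (N+k) * cfP cc (N+1) - cfP cc N * cfP cc (N+k+1) = 0 := by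
      rw [← hγr, h3]; simp
    have hq1 : 0 < cfQ cc (N+1) := hQpos _ (by omega)
    have hq1' : 0 < cfQ cc (N+k+1) := hQpos _ (by omega)
    have hdet1 := cf_det cc N
    have hdet2 := cf_det cc (N+k)
    set x0 : ℝ := cfP cc (N+1) / cfQ cc (N+1) with hx0def
    have hx0 : cfQ cc (N+1) * x0 - cfP cc (N+1) = 0 := by
      rw [hx0def]; field_simp; ring
    have hE0 : (cfP cc N - cfQ cc N * x0) * (cfQ cc (N+k+1) * x0 - cfP cc (N+k+1)) = 0 := by
      linear_combination x0^2 * hα0 + x0 * hβ0 + hγ0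
        + (cfP cc (N+k) - cfQ cc (N+k) * x0) * hx0
    have hfac : cfP cc N - cfQ cc N * x0 ≠ 0 := by
      intro h0
      have h1 : cfQ cc (N+1) * (cfP cc N - cfQ cc N * x0) = -(-1:ℝ)^(N+1) := by
        rw [hx0def]
        field_simp
        linear_combination -hdet1
      rw [h0, mul_zero] at h1
      have : (-1:ℝ)^(N+1) ≠ 0 := pow_ne_zero _ (by norm_num)
      exact this (by linarith)
    have hsec : cfQ cc (N+k+1) * x0 - cfP cc (N+k+1) = 0 :=
      (mul_eq_zero.mp hE0).resolve_left hfac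
    have hpq : cfP cc (N+k+1) * cfQ cc (N+1) = cfP cc (N+1) * cfQ cc (N+k+1) := by
      rw [hx0def] at hsec
      field_simp at hsec
      linarith
    -- telescope the convergents: they cannot repeat
    set w : ℕ → ℝ := fun j => 1/(cfQ cc (N+1+j) * cfQ cc (N+2+j)) with hwdef
    have hwpos : ∀ j, 0 < w j := by
      intro j
      rw [hwdef]
      exact one_div_pos.2 (mul_pos (hQpos _ (by omega)) (hQpos _ (by omega)))
    have hwdec : ∀ j, w (j+1) < w j := by
      intro j
      rw [hwdef]
      simp only
      rw [show N+1+(j+1) = N+2+j by omega, show N+2+(j+1) = N+3+j by omega]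
      apply one_div_lt_one_div_of_lt
      · exact mul_pos (hQpos _ (by omega)) (hQpos _ (by omega))
      · have hlt := cfQ_lt_two cc hccpos (N+1+j)
        rw [show N+1+j+2 = N+3+j by omega] at hlt
        nlinarith [hQpos (N+1+j) (by omega), hQpos (N+2+j) (by omega), hQpos (N+3+j) (by omega)]
    have hterm : ∀ j : ℕ, (fun i => cfP cc (N+1+i)/cfQ cc (N+1+i)) (j+1)
        - (fun i => cfP cc (N+1+i)/cfQ cc (N+1+i)) j = (-1:ℝ)^N * ((-1)^j * w j) := by
      intro j
      simp only
      have hq1j : 0 < cfQ cc (N+1+j) := hQpos _ (by omega)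
      have hq2j : 0 < cfQ cc (N+2+j) := hQpos _ (by omega)
      have hdet := cf_det cc (N+1+j)
      rw [show N+1+j+1 = N+2+j by omega] at hdet
      rw [show N+1+(j+1) = N+2+j by omega, hwdef]
      rw [div_sub_div _ _ hq2j.ne' hq1j.ne']
      rw [div_eq_iff (mul_ne_zero hq2j.ne' hq1j.ne')]
      have hpow : (-1:ℝ)^(N+2+j) = (-1)^N * (-1)^j := by
        rw [show N+2+j = N+j+2 by omega, pow_add, pow_add]
        ring
      rw [hpow] at hdet
      field_simp
      linear_combination hdet
    have htel := Finset.sum_range_sub (fun i => cfP cc (N+1+i)/cfQ cc (N+1+i)) k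
    rw [Finset.sum_congr rfl (fun j _ => hterm j)] at htel
    rw [← Finset.mul_sum] at htel
    have hS := (alt_sum k w hwpos hwdec).2 hk1
    have hrhs : (fun i => cfP cc (N+1+i)/cfQ cc (N+1+i)) k
        - (fun i => cfP cc (N+1+i)/cfQ cc (N+1+i)) 0 = 0 := by
      simp only
      rw [show N+1+k = N+k+1 by omega, show N+1+0 = N+1 by omega]
      rw [div_sub_div _ _ (hQpos (N+k+1) (by omega)).ne' hq1.ne']
      rw [div_eq_zero_iff]
      left
      linarith [hpq]
    rw [hrhs] at htel
    have hne : (-1:ℝ)^N * ∑ j ∈ Finset.range k, (-1:ℝ)^j * w j ≠ 0 :=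
      mul_ne_zero (pow_ne_zero _ (by norm_num)) (ne_of_gt hS)
    exact hne htel
  -- ξ is not in (the image of) K
  have hfin : FiniteDimensional ℚ K := Module.finite_of_finrank_pos (by rw [hK]; norm_num)
  have hξK : ∀ z : K, (z : ℝ) ≠ ξ := by
    intro z hz
    have hzint : IsIntegral ℚ z := IsIntegral.of_finite ℚ z
    have haez : (Polynomial.aeval (z:ℝ)) (minpoly ℚ z) = 0 := by
      let φ : K →ₐ[ℚ] ℝ :=
        { toRingHom := K.subtype,
          commutes' := fun q => by
            show K.subtype (algebraMap ℚ K q) = algebraMap ℚ ℝ q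
            rw [eq_ratCast (algebraMap ℚ K) q, map_ratCast, eq_ratCast] }
      have h := Polynomial.aeval_algHom_apply φ z (minpoly ℚ z)
      rw [minpoly.aeval, map_zero] at h
      exact h
    rw [hz] at haez
    have hdvd : minpoly ℚ ξ ∣ minpoly ℚ z := minpoly.dvd ℚ ξ haez
    have hle := Polynomial.natDegree_le_of_dvd hdvd (minpoly.ne_zero hzint)
    have h2 := minpoly.natDegree_le (A := ℚ) z
    rw [hK] at h2
    rw [hquartic] at hle
    omega
  -- match (α, β, γ) with (A, B, C)
  have hlin : ((α:ℝ)*(B:ℝ) - (A:ℝ)*(β:ℝ))*ξ + ((α:ℝ)*(C:ℝ) - (A:ℝ)*(γ:ℝ)) = 0 := by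
    linear_combination (α:ℝ) * heq - (A:ℝ) * hquad
  have hstep : α * B = A * β ∧ α * C = A * γ := by
    by_cases hc1 : α * B - A * β = 0
    · have hc1r : (α:ℝ)*(B:ℝ) - (A:ℝ)*(β:ℝ) = 0 := by
        have h0 : ((α * B - A * β : K) : ℝ) = 0 := by rw [hc1]; simp
        push_cast at h0
        linarith
      constructor
      · exact sub_eq_zero.mp hc1
      · have hc0r : (α:ℝ)*(C:ℝ) - (A:ℝ)*(γ:ℝ) = 0 := by
          rw [hc1r, zero_mul, zero_add] at hlin
          exact hlin
        have h0 : ((α * C - A * γ : K) : ℝ) = 0 := by push_cast; linarith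
        have h0' : α * C - A * γ = 0 := by exact_mod_cast h0
        exact sub_eq_zero.mp h0'
    · exfalso
      have hc1r : (α:ℝ)*(B:ℝ) - (A:ℝ)*(β:ℝ) ≠ 0 := by
        intro h0
        apply hc1
        have : ((α * B - A * β : K) : ℝ) = 0 := by push_cast; linarith
        exact_mod_cast this
      apply hξK (-(α * C - A * γ)/(α * B - A * β))
      push_cast
      rw [div_eq_iff hc1r]
      linarith [hlin]
  have hαne : α ≠ 0 := by
    intro h0
    apply hne0
    refine ⟨h0, ?_, ?_⟩
    · have h := hstep.1
      rw [h0, zero_mul] at h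
      exact ((mul_eq_zero.mp h.symm).resolve_left hA)
    · have h := hstep.2
      rw [h0, zero_mul] at h
      exact ((mul_eq_zero.mp h.symm).resolve_left hA)
  -- conjugate side: construct a root in the interval
  obtain ⟨k', hk'⟩ : ∃ k', k = k' + 1 := ⟨k - 1, by omega⟩
  set d : ℕ → ℝ := fun n => σ (a n) with hddef
  have hd' : ∀ n, 1 ≤ n → 0 < d n := fun n hn => (hge n hn).2
  set e : ℕ → ℝ := fun j => d (j+(N+1)) with hedef
  have heall : ∀ n, 0 < e n := fun n => (hge (n+(N+1)) (by omega)).2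
  have he' : ∀ n, 1 ≤ n → 0 < e n := fun n _ => heall n
  have he0 : 0 < e 0 := heall 0
  have he1 : 0 < e 1 := heall 1
  have hek : e (k'+1) = e 0 := by
    show d ((k'+1)+(N+1)) = d (0+(N+1))
    simp only [hddef]
    congr 1
    have h := hper (N+1) (by omega)
    rw [show (k'+1)+(N+1) = N+1+k by omega, show (0:ℕ)+(N+1) = N+1 by omega]
    exact h
  have hqk : 0 < cfQ e (k'+1) := (cfQ_nn_pos e he' k').2
  have hqk' : 0 ≤ cfQ e k' := (cfQ_nn_pos e he' k').1
  -- fixed point of the period map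
  set f : ℝ → ℝ := fun t => (cfP e (k'+1) * t + cfP e k')/(cfQ e (k'+1) * t + cfQ e k') - t
    with hfdef
  set r : ℝ := e 0 + 1/e 1 with hrdef
  have he0r : e 0 < r := by rw [hrdef]; linarith [one_div_pos.2 he1]
  have hcont : ContinuousOn f (Set.Icc (e 0) r) := by
    apply ContinuousOn.sub _ continuousOn_id
    apply ContinuousOn.div
    · exact ((continuous_const.mul continuous_id).add continuous_const).continuousOn
    · exact ((continuous_const.mul continuous_id).add continuous_const).continuousOn
    · intro t ht
      have h0t : 0 < t := lt_of_lt_of_le he0 ht.1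
      have : 0 < cfQ e (k'+1) * t + cfQ e k' := by positivity
      exact this.ne'
  have hfe0 : 0 < f (e 0) := by
    obtain ⟨u, hu, -, hequ⟩ := cf_interval e he' k' (e 0) he0
    rw [hfdef]
    simp only
    rw [hequ]
    have := one_div_pos.2 hu
    linarith
  have hfr : f r < 0 := by
    obtain ⟨u, hu, himp, hequ⟩ := cf_interval e he' k' r (by rw [hrdef]; positivity)
    have hu1 : e 1 < u := himp (by rw [hek]; exact he0r)
    rw [hfdef]
    simp only
    rw [hequ, hrdef]
    have := one_div_lt_one_div_of_lt he1 hu1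
    linarith
  obtain ⟨η, hηmem, hfη⟩ := intermediate_value_Icc' (le_of_lt he0r) hcont ⟨hfr.le, hfe0.le⟩
  have hηe0 : e 0 < η := by
    refine lt_of_le_of_ne hηmem.1 ?_
    intro h0
    rw [← h0] at hfη
    exact (ne_of_gt hfe0) hfη
  have hη0 : 0 < η := lt_trans he0 hηe0
  have hfix : cfP e (k'+1) * η + cfP e k' = η * (cfQ e (k'+1) * η + cfQ e k') := by
    have hden : 0 < cfQ e (k'+1) * η + cfQ e k' := by positivity
    have h := hfη
    rw [hfdef] at h
    simp only at h
    have h2 : (cfP e (k'+1) * η + cfP e k')/(cfQ e (k'+1) * η + cfQ e k') = η := by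
      linarith
    exact (div_eq_iff hden.ne').mp h2
  -- the candidate root x
  obtain ⟨u, hu, himp, hxeq⟩ := cf_interval d hd' N η hη0
  have hu2 : 0 < cfQ d (N+1) * η + cfQ d N := by
    have h1 : 0 < cfQ d (N+1) := (cfQ_nn_pos d hd' N).2
    have h2 : 0 ≤ cfQ d N := (cfQ_nn_pos d hd' N).1
    positivity
  obtain ⟨x, hxval, hxu⟩ : ∃ x : ℝ, x = d 0 + 1/u ∧
      x * (cfQ d (N+1) * η + cfQ d N) = cfP d (N+1) * η + cfP d N :=
    ⟨(cfP d (N+1) * η + cfP d N)/(cfQ d (N+1) * η + cfQ d N), hxeq,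
      div_mul_cancel₀ _ hu2.ne'⟩
  have hdN1 : d (N+1) = e 0 := by
    show d (N+1) = d (0+(N+1))
    congr 1
    omega
  have hud1 : d 1 < u := himp (by rw [hdN1]; exact hηe0)
  have hd1 : 0 < d 1 := hd' 1 le_rfl
  have hx1 : d 0 < x := by
    rw [hxval]
    linarith [one_div_pos.2 hu]
  have hx2 : x < d 0 + 1/d 1 := by
    rw [hxval]
    have := one_div_lt_one_div_of_lt hd1 hud1
    linarith
  have R1 : cfP d N - cfQ d N * x = η * (cfQ d (N+1) * x - cfP d (N+1)) := by
    linear_combination -hxu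
  have hc1 : cfP d (N+1+(k'+1)) = cfP d (N+1) * cfP e (k'+1) + cfP d N * cfQ e (k'+1) :=
    (cf_comp d N (k'+1)).1
  have hc2 : cfQ d (N+1+(k'+1)) = cfQ d (N+1) * cfP e (k'+1) + cfQ d N * cfQ e (k'+1) :=
    (cf_comp d N (k'+1)).2
  have hc3 : cfP d (N+1+k') = cfP d (N+1) * cfP e k' + cfP d N * cfQ e k' :=
    (cf_comp d N k').1
  have hc4 : cfQ d (N+1+k') = cfQ d (N+1) * cfP e k' + cfQ d N * cfQ e k' :=
    (cf_comp d N k').2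
  have R2 : cfP d (N+1+k') - cfQ d (N+1+k') * x
      = η * (cfQ d (N+1+(k'+1)) * x - cfP d (N+1+(k'+1))) := by
    rw [hc1, hc2, hc3, hc4]
    linear_combination (cfQ e k' + η * cfQ e (k'+1)) * R1
      + (cfP d (N+1) - x * cfQ d (N+1)) * hfix
  have hσP : ∀ i, σ (cfP a i) = cfP d i := fun i => (cf_hom σ a i).1
  have hσQ : ∀ i, σ (cfQ a i) = cfQ d i := fun i => (cf_hom σ a i).2
  have hσα : σ α = cfQ d (N+1+k') * cfQ d (N+1) - cfQ d N * cfQ d (N+1+(k'+1)) := by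
    rw [hαdef]
    simp only [map_sub, map_mul, hσP, hσQ]
    rw [show N+k = N+1+k' by omega, show N+1+k'+1 = N+1+(k'+1) by omega]
  have hσβ : σ β = cfP d N * cfQ d (N+1+(k'+1)) + cfP d (N+1+(k'+1)) * cfQ d N
      - cfP d (N+1+k') * cfQ d (N+1) - cfP d (N+1) * cfQ d (N+1+k') := by
    rw [hβdef]
    simp only [map_sub, map_add, map_mul, hσP, hσQ]
    rw [show N+k = N+1+k' by omega, show N+1+k'+1 = N+1+(k'+1) by omega]
  have hσγ : σ γ = cfP d (N+1+k') * cfP d (N+1) - cfP d N * cfP d (N+1+(k'+1)) := by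
    rw [hγdef]
    simp only [map_sub, map_mul, hσP, hσQ]
    rw [show N+k = N+1+k' by omega, show N+1+k'+1 = N+1+(k'+1) by omega]
  have hquadσ : σ α * x^2 + σ β * x + σ γ = 0 := by
    rw [hσα, hσβ, hσγ]
    linear_combination (cfQ d (N+1+(k'+1)) * x - cfP d (N+1+(k'+1))) * R1
      - (cfQ d (N+1) * x - cfP d (N+1)) * R2
  apply hnoroot
  refine ⟨x, ?_, hx1, hx2⟩
  have h1 : σ α * σ B = σ A * σ β := by rw [← map_mul, ← map_mul, hstep.1]
  have h2 : σ α * σ C = σ A * σ γ := by rw [← map_mul, ← map_mul, hstep.2]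
  have hσαne : σ α ≠ 0 := by
    intro h0
    exact hαne (σ.injective (by rw [h0, map_zero]))
  have hmain : σ α * (σ A * x^2 + σ B * x + σ C) = 0 := by
    linear_combination σ A * hquadσ + x * h1 + h2
  exact (mul_eq_zero.mp hmain).resolve_left hσαne
end
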